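/- Lerch's congruence: for every odd prime p and positive integer m with p ∤ m, (m^p - m)/p ≡ ∑_{j=1}^{p-1} ⌊jm/p⌋/j (mod p), as a congruence of rationals with denominators coprime to p. -/

import Mathlib

lemma bin_approx (a b : ℤ) : ∀ n : ℕ, b^2 ∣ (a + b)^n - (a^n + n * a^(n-1) * b)
  | 0 => by simp
  | 1 => by norm_num
  | (n+2) => by
      obtain ⟨c, hc⟩ := bin_approx a b (n+1)
      refine ⟨(a+b)*c + (n+1)*a^n, ?_⟩
      simp only [Nat.add_sub_cancel] at hc ⊢
      push_cast at hc ⊢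
      linear_combination (a+b) * hc

lemma per_term (p m j : ℕ) (hp1 : 1 < p) :
    ((p:ℤ))^2 ∣ ((j*m % p : ℕ):ℤ)^(p-1)
      - (((j:ℤ)*m)^(p-1) + p * ((j*m/p : ℕ):ℤ) * ((j:ℤ)*m)^(p-2)) := by
  have key := bin_approx ((j:ℤ)*(m:ℤ)) (-((p:ℤ)*((j*m/p : ℕ):ℤ))) (p-1)
  have hab : (j:ℤ)*(m:ℤ) + -((p:ℤ)*((j*m/p : ℕ):ℤ)) = ((j*m % p : ℕ):ℤ) := by
    have h := Nat.div_add_mod (j*m) p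
    have h2 : (p:ℤ)*((j*m/p : ℕ):ℤ) + ((j*m % p : ℕ):ℤ) = (j:ℤ)*(m:ℤ) := by
      exact_mod_cast congrArg (Nat.cast : ℕ → ℤ) h
    linarith
  rw [hab] at key
  rw [show ((p-1:ℕ):ℤ) = (p:ℤ)-1 from by omega] at key
  rw [show p-1-1 = p-2 from by omega] at key
  obtain ⟨c, hc⟩ := key
  exact ⟨((j*m/p : ℕ):ℤ)^2*c - ((j*m/p : ℕ):ℤ)*((j:ℤ)*m)^(p-2), by linear_combination hc⟩

lemma fermat_dvd (p a : ℕ) (hp : p.Prime) (hpa : ¬ p ∣ a) :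
    (p:ℤ) ∣ (a:ℤ)^(p-1) - 1 := by
  haveI : Fact p.Prime := ⟨hp⟩
  rw [← ZMod.intCast_zmod_eq_zero_iff_dvd]
  push_cast
  rw [sub_eq_zero]
  have ha : (a : ZMod p) ≠ 0 := by
    rw [Ne, ZMod.natCast_eq_zero_iff]; exact hpa
  exact (ZMod.pow_card_sub_one_eq_one ha).symm ▸ rfl

lemma perm_sum (p m : ℕ) (hp : p.Prime) (hpm : ¬ p ∣ m) :
    ∑ j ∈ Finset.Icc 1 (p-1), ((j*m % p : ℕ):ℤ)^(p-1)
      = ∑ j ∈ Finset.Icc 1 (p-1), (j:ℤ)^(p-1) := by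
  haveI : Fact p.Prime := ⟨hp⟩
  have hp0 : 0 < p := hp.pos
  have hmaps : ∀ j ∈ Finset.Icc 1 (p-1), j*m % p ∈ Finset.Icc 1 (p-1) := by
    intro j hj
    rw [Finset.mem_Icc] at hj ⊢
    have hmod : j*m % p < p := Nat.mod_lt _ hp0
    have hne : j*m % p ≠ 0 := by
      rw [Ne, ← Nat.dvd_iff_mod_eq_zero]
      intro hd
      rcases (Nat.Prime.dvd_mul hp).mp hd with h | h
      · exact absurd (Nat.le_of_dvd (by omega) h) (by omega)
      · exact hpm h
    omega
  have hinj : ∀ j1 ∈ Finset.Icc 1 (p-1), ∀ j2 ∈ Finset.Icc 1 (p-1),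
      j1*m % p = j2*m % p → j1 = j2 := by
    intro j1 hj1 j2 hj2 heq
    rw [Finset.mem_Icc] at hj1 hj2
    have h1 : ((j1*m : ℕ) : ZMod p) = ((j2*m : ℕ) : ZMod p) := by
      rw [← ZMod.natCast_mod, heq, ZMod.natCast_mod]
    push_cast at h1
    have hm0 : (m : ZMod p) ≠ 0 := by
      rw [Ne, ZMod.natCast_eq_zero_iff]; exact hpm
    have h2 : (j1 : ZMod p) = (j2 : ZMod p) := mul_right_cancel₀ hm0 h1
    have := congrArg ZMod.val h2
    rwa [ZMod.val_cast_of_lt (by omega), ZMod.val_cast_of_lt (by omega)] at this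
  apply Finset.sum_bij (fun j _ => j*m % p) hmaps hinj
  · exact fun b hb => by
      obtain ⟨a, ha, hab⟩ := Finset.surj_on_of_inj_on_of_card_le _ hmaps
        (fun a1 a2 h1 h2 he => hinj a1 h1 a2 h2 he) le_rfl b hb
      exact ⟨a, ha, hab.symm⟩
  · intro j hj
    rfl



/-- Lerch's congruence: for an odd prime `p` and positive integer `m` with `p ∤ m`,
`(m^p - m)/p ≡ ∑_{j=1}^{p-1} ⌊jm/p⌋/j (mod p)`, i.e. `p` divides the numerator of
the difference of these two rationals. -/
theorem lerch_congruence (p m : ℕ) (hp : p.Prime) (hodd : Odd p)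
    (hm : 0 < m) (hpm : ¬ p ∣ m) :
    (p : ℤ) ∣ ((((m : ℚ))^p - m)/p
      - ∑ j ∈ Finset.Icc 1 (p-1), ((j*m/p : ℕ) : ℚ)/j).num := by
  haveI : Fact p.Prime := ⟨hp⟩
  have hp1 : 1 < p := hp.one_lt
  have hp0 : (0:ℕ) < p := hp.pos
  set s := Finset.Icc 1 (p-1) with hs
  have hmem : ∀ j ∈ s, 1 ≤ j ∧ j < p := by
    intro j hj
    rw [hs, Finset.mem_Icc] at hj
    omega
  have hpj : ∀ j ∈ s, ¬ p ∣ j := by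
    intro j hj hdvd
    obtain ⟨h1, h2⟩ := hmem j hj
    exact absurd (Nat.le_of_dvd (by omega) hdvd) (by omega)
  -- the integer quantity X
  set X : ℤ := ∑ j ∈ s, ((j*m/p : ℕ):ℤ) * ((j:ℤ)*m)^(p-2) with hX
  set M : ℤ := (m:ℤ)^(p-1) - 1 with hM
  set T : ℤ := ∑ j ∈ s, (j:ℤ)^(p-1) with hT
  -- step HA : sum of per_term
  have HA : (p:ℤ)^2 ∣ T - (T * (m:ℤ)^(p-1) + p * X) := by
    have h1 : (p:ℤ)^2 ∣ ∑ j ∈ s, (((j*m % p : ℕ):ℤ)^(p-1)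
        - (((j:ℤ)*m)^(p-1) + p * ((j*m/p : ℕ):ℤ) * ((j:ℤ)*m)^(p-2))) :=
      Finset.dvd_sum (fun j _ => per_term p m j hp1)
    have e1 : ∑ j ∈ s, ((j:ℤ)*(m:ℤ))^(p-1) = T * (m:ℤ)^(p-1) := by
      rw [hT, Finset.sum_mul]
      exact Finset.sum_congr rfl (fun j _ => by rw [mul_pow])
    have e2 : ∑ j ∈ s, (p:ℤ) * ((j*m/p : ℕ):ℤ) * ((j:ℤ)*(m:ℤ))^(p-2) = (p:ℤ) * X := by
      rw [hX, Finset.mul_sum]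
      exact Finset.sum_congr rfl (fun j _ => by ring)
    have h2 : ∑ j ∈ s, (((j*m % p : ℕ):ℤ)^(p-1)
        - (((j:ℤ)*m)^(p-1) + p * ((j*m/p : ℕ):ℤ) * ((j:ℤ)*m)^(p-2)))
        = T - (T * (m:ℤ)^(p-1) + p * X) := by
      rw [Finset.sum_sub_distrib, Finset.sum_add_distrib, e1, e2, perm_sum p m hp hpm]
    rwa [h2] at h1
  -- step H3
  have H3 : (p:ℤ)^2 ∣ T * M - ((p:ℤ)-1) * M := by
    have h1 : (p:ℤ)^2 ∣ ∑ j ∈ s, ((j:ℤ)^(p-1) - 1) * M :=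
      Finset.dvd_sum (fun j hj => by
        rw [sq]
        exact mul_dvd_mul (fermat_dvd p j hp (hpj j hj)) (fermat_dvd p m hp hpm))
    have hcard : (s.card : ℤ) = (p:ℤ) - 1 := by
      rw [hs, Nat.card_Icc]
      push_cast
      omega
    have h2 : ∑ j ∈ s, ((j:ℤ)^(p-1) - 1) * M = T * M - ((p:ℤ)-1) * M := by
      have e3 : ∑ j ∈ s, ((j:ℤ)^(p-1) - 1) * M
          = ∑ j ∈ s, ((j:ℤ)^(p-1) * M) - ∑ _j ∈ s, M := by
        rw [← Finset.sum_sub_distrib]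
        exact Finset.sum_congr rfl (fun j _ => by ring)
      rw [e3, Finset.sum_const, nsmul_eq_mul, hcard, ← Finset.sum_mul, ← hT]
    rwa [h2] at h1
  -- step H4
  have H4 : (p:ℤ)^2 ∣ (p:ℤ) * M := by
    rw [sq]
    exact mul_dvd_mul_left _ (fermat_dvd p m hp hpm)
  -- combine
  have E1 : (p:ℤ)^2 ∣ M - (p:ℤ) * X := by
    obtain ⟨c1, h1⟩ := HA
    obtain ⟨c2, h2⟩ := H3
    obtain ⟨c3, h3⟩ := H4
    exact ⟨c1 + c2 + c3, by linear_combination h1 + h2 + h3⟩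
  have hmp : (m:ℤ)^p = (m:ℤ)^(p-1) * m := by
    rw [← pow_succ]
    congr 1
    omega
  have hMain : (p:ℤ)^2 ∣ (m:ℤ)^p - (m:ℤ) - (p:ℤ) * m * X := by
    obtain ⟨c, hc⟩ := E1
    exact ⟨(m:ℤ) * c, by linear_combination (m:ℤ)*hc + hmp⟩
  -- extract q0 with m^p - m = p * q0
  obtain ⟨c0, hc0⟩ := hMain
  set q0 : ℤ := (p:ℤ)*c0 + (m:ℤ)*X with hq0def
  have hq0 : (m:ℤ)^p - (m:ℤ) = (p:ℤ) * q0 := by rw [hq0def]; linarith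
  have hq0X : q0 - (m:ℤ)*X = (p:ℤ)*c0 := by rw [hq0def]; ring
  -- the factorial W
  set W : ℕ := (p-1).factorial with hW
  have hjW : ∀ j ∈ s, j ∣ W := fun j hj =>
    Nat.dvd_factorial (hmem j hj).1 (by have := (hmem j hj).2; omega)
  set N : ℤ := q0 * W - ∑ j ∈ s, ((j*m/p : ℕ):ℤ) * ((W/j : ℕ):ℤ) with hNdef
  -- basic nonvanishing in ZMod p
  have hm0 : (m : ZMod p) ≠ 0 := by
    rw [Ne, ZMod.natCast_eq_zero_iff]; exact hpm
  have hj0 : ∀ j ∈ s, (j : ZMod p) ≠ 0 := by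
    intro j hj
    rw [Ne, ZMod.natCast_eq_zero_iff]; exact hpj j hj
  -- p ∣ N
  have hpN : (p:ℤ) ∣ N := by
    rw [← ZMod.intCast_zmod_eq_zero_iff_dvd]
    set Xc : ZMod p := ∑ j ∈ s, ((j*m/p : ℕ) : ZMod p) * ((j:ZMod p)*(m:ZMod p))^(p-2) with hXc
    have hXcast : ((X:ℤ) : ZMod p) = Xc := by
      rw [hX, hXc]
      simp only [Int.cast_sum, Int.cast_mul, Int.cast_pow, Int.cast_natCast]
    have hq0c : ((q0:ℤ) : ZMod p) = (m:ZMod p) * Xc := by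
      have h := congrArg (fun z : ℤ => (z : ZMod p)) hq0X
      simp only [Int.cast_sub, Int.cast_mul, Int.cast_natCast] at h
      rw [ZMod.natCast_self] at h
      rw [hXcast] at h
      simp at h
      linear_combination h
    have hterm : ∀ j ∈ s, ((j*m/p : ℕ) : ZMod p) * ((W/j : ℕ) : ZMod p)
        = (W:ZMod p) * ((m:ZMod p) * (((j*m/p : ℕ):ZMod p) * ((j:ZMod p)*(m:ZMod p))^(p-2))) := by
      intro j hj
      have hjm0 : (j:ZMod p)*(m:ZMod p) ≠ 0 := mul_ne_zero (hj0 j hj) hm0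
      apply mul_right_cancel₀ hjm0
      have hWj : ((W/j : ℕ):ZMod p) * (j:ZMod p) = (W:ZMod p) := by
        have := Nat.div_mul_cancel (hjW j hj)
        exact_mod_cast congrArg (fun n : ℕ => (n : ZMod p)) this
      have hpow : ((j:ZMod p)*(m:ZMod p))^(p-2) * ((j:ZMod p)*(m:ZMod p))
          = 1 := by
        rw [← pow_succ, show p-2+1 = p-1 from by omega]
        exact ZMod.pow_card_sub_one_eq_one hjm0
      calc ((j*m/p : ℕ) : ZMod p) * ((W/j : ℕ) : ZMod p) * ((j:ZMod p)*(m:ZMod p))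
          = ((j*m/p : ℕ) : ZMod p) * (((W/j : ℕ) : ZMod p) * (j:ZMod p)) * (m:ZMod p) := by ring
        _ = ((j*m/p : ℕ) : ZMod p) * (W:ZMod p) * (m:ZMod p) := by rw [hWj]
        _ = (W:ZMod p) * ((m:ZMod p) * (((j*m/p : ℕ):ZMod p)
              * (((j:ZMod p)*(m:ZMod p))^(p-2) * ((j:ZMod p)*(m:ZMod p))))) := by
            rw [hpow]; ring
        _ = _ := by ring
    have hsum : ((∑ j ∈ s, ((j*m/p : ℕ):ℤ) * ((W/j : ℕ):ℤ) : ℤ) : ZMod p)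
        = (W:ZMod p) * ((m:ZMod p) * Xc) := by
      simp only [Int.cast_sum, Int.cast_mul, Int.cast_natCast]
      rw [Finset.sum_congr rfl hterm, ← Finset.mul_sum, ← Finset.mul_sum, hXc]
    rw [hNdef, Int.cast_sub, Int.cast_mul, hsum, hq0c]
    simp only [Int.cast_natCast]
    ring
  -- the rational computation
  set D : ℚ := (((m : ℚ))^p - m)/p - ∑ j ∈ s, ((j*m/p : ℕ) : ℚ)/j with hD
  have hp0Q : (p:ℚ) ≠ 0 := by exact_mod_cast hp0.ne'
  have hfirst : ((m:ℚ)^p - (m:ℚ))/(p:ℚ) = (q0:ℚ) := by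
    have hq : (m:ℚ)^p - (m:ℚ) = (p:ℚ)*(q0:ℚ) := by exact_mod_cast congrArg (fun z : ℤ => (z:ℚ)) hq0
    rw [hq]
    field_simp
  have hDW : D * (W:ℚ) = ((N:ℤ):ℚ) := by
    rw [hD, hNdef, sub_mul, hfirst, Finset.sum_mul]
    simp only [Int.cast_sub, Int.cast_mul, Int.cast_sum, Int.cast_natCast]
    congr 1
    apply Finset.sum_congr rfl
    intro j hj
    have hjQ : (j:ℚ) ≠ 0 := by
      have := (hmem j hj).1
      positivity
    have hWj : (W:ℚ) = (j:ℚ) * ((W/j : ℕ):ℚ) := by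
      have h := Nat.div_mul_cancel (hjW j hj)
      have h2 : ((W/j : ℕ):ℚ) * (j:ℚ) = (W:ℚ) := by exact_mod_cast congrArg (fun n : ℕ => (n:ℚ)) h
      linarith
    rw [hWj]
    field_simp
  -- conclude
  have hdenQ : ((D.den : ℚ)) ≠ 0 := by
    exact_mod_cast D.den_nz
  have hnum : D * (D.den:ℚ) = (D.num : ℚ) := Rat.mul_den_eq_num D
  have hnumW : (D.num : ℚ) * (W:ℚ) = ((N:ℤ):ℚ) * (D.den:ℚ) := by
    rw [← hnum, mul_right_comm, hDW]
  have hnumWZ : D.num * (W:ℤ) = N * (D.den:ℤ) := by exact_mod_cast hnumW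
  have hpprime : Prime (p:ℤ) := Int.prime_iff_natAbs_prime.mpr (by simpa using hp)
  have hdvd : (p:ℤ) ∣ D.num * (W:ℤ) := hnumWZ ▸ Dvd.dvd.mul_right hpN _
  rcases hpprime.dvd_mul.mp hdvd with h | h
  · exact h
  · exfalso
    rw [Int.natCast_dvd_natCast] at h
    have := (Nat.Prime.dvd_factorial hp).mp h
    omega
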